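/- For any three subspaces U1, U2, U3 of a finite-dimensional vector space V over a field F, dim(U1 ∩ U2 ∩ U3) = dim U1 + dim U2 + dim U3 − rank(M), where M is the block matrix [[A1, A2, 0],[A1, 0, A3]] formed from matrices A_i whose columns are bases of U_i: specifically, if A_i ∈ F^{d×μ_i} has column span U_i, then dim(U1 ∩ U2 ∩ U3) = μ1 + μ2 + μ3 − rank([[A1, A2, 0],[A1, 0, A3]]). -/

import Mathlib

open Matrix

/-- The `F`-linear span of the columns of a matrix. -/
noncomputable def colSpan {F : Type*} [Field F] {m n : Type*} [Fintype m] [Fintype n]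
    (M : Matrix m n F) : Submodule F (m → F) :=
  Submodule.span F (Set.range M.transpose)

lemma colSpan_mem_iff {F : Type*} [Field F] {m n : Type*} [Fintype m] [Fintype n]
    (M : Matrix m n F) (w : m → F) : w ∈ colSpan M ↔ ∃ c, M *ᵥ c = w := by
  rw [colSpan, show Set.range M.transpose = Set.range M.col from rfl, ← Matrix.range_mulVecLin]
  exact LinearMap.mem_range

/-- Three-subspace intersection dimension formula: if `A_i ∈ F^{d×μ_i}` has linearly
independent columns spanning `U_i`, then
`dim(U1 ∩ U2 ∩ U3) = μ1 + μ2 + μ3 − rank([[A1, A2, 0], [A1, 0, A3]])`. -/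
theorem stmt19 {F : Type*} [Field F] {d μ1 μ2 μ3 : ℕ}
    (A1 : Matrix (Fin d) (Fin μ1) F) (A2 : Matrix (Fin d) (Fin μ2) F)
    (A3 : Matrix (Fin d) (Fin μ3) F)
    (h1 : LinearIndependent F A1.transpose) (h2 : LinearIndependent F A2.transpose)
    (h3 : LinearIndependent F A3.transpose) :
    Module.finrank F (colSpan A1 ⊓ colSpan A2 ⊓ colSpan A3 : Submodule F (Fin d → F)) =
      μ1 + μ2 + μ3 -
        (Matrix.fromBlocks (Matrix.fromCols A1 A2) 0
          (Matrix.fromCols A1 0) A3).rank := by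
  classical
  set M : Matrix (Fin d ⊕ Fin d) ((Fin μ1 ⊕ Fin μ2) ⊕ Fin μ3) F :=
    Matrix.fromBlocks (Matrix.fromCols A1 A2) 0 (Matrix.fromCols A1 0) A3 with hM
  -- kernel characterization
  have hMv : ∀ v : ((Fin μ1 ⊕ Fin μ2) ⊕ Fin μ3) → F,
      M *ᵥ v = Sum.elim
        (A1 *ᵥ (v ∘ Sum.inl ∘ Sum.inl) + A2 *ᵥ (v ∘ Sum.inl ∘ Sum.inr))
        (A1 *ᵥ (v ∘ Sum.inl ∘ Sum.inl) + A3 *ᵥ (v ∘ Sum.inr)) := by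
    intro v
    rw [hM, fromBlocks_mulVec]
    have h0 : (0 : Matrix (Fin d) (Fin μ3) F) *ᵥ (v ∘ Sum.inr) = 0 := zero_mulVec _
    have hvl : (v ∘ Sum.inl) = Sum.elim (v ∘ Sum.inl ∘ Sum.inl) (v ∘ Sum.inl ∘ Sum.inr) := by
      ext (i | i) <;> rfl
    rw [h0, hvl, fromCols_mulVec_sumElim, fromCols_mulVec_sumElim, zero_mulVec,
      add_zero, add_zero]
  have hkerM : ∀ v : ((Fin μ1 ⊕ Fin μ2) ⊕ Fin μ3) → F,
      v ∈ LinearMap.ker M.mulVecLin ↔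
      (A1 *ᵥ (v ∘ Sum.inl ∘ Sum.inl) + A2 *ᵥ (v ∘ Sum.inl ∘ Sum.inr) = 0 ∧
       A1 *ᵥ (v ∘ Sum.inl ∘ Sum.inl) + A3 *ᵥ (v ∘ Sum.inr) = 0) := by
    intro v
    rw [LinearMap.mem_ker, Matrix.mulVecLin_apply, hMv]
    constructor
    · intro h
      exact ⟨funext fun i => congrFun h (Sum.inl i), funext fun i => congrFun h (Sum.inr i)⟩
    · rintro ⟨ha, hb⟩
      rw [ha, hb]
      ext (i | i) <;> rfl
  -- the comparison map
  let g : (((Fin μ1 ⊕ Fin μ2) ⊕ Fin μ3) → F) →ₗ[F] (Fin d → F) :=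
    A1.mulVecLin ∘ₗ LinearMap.funLeft F F (fun i => Sum.inl (Sum.inl i))
  have hg : ∀ v, g v = A1 *ᵥ (v ∘ Sum.inl ∘ Sum.inl) := fun v => rfl
  have hsub : ∀ v ∈ LinearMap.ker M.mulVecLin,
      g v ∈ (colSpan A1 ⊓ colSpan A2 ⊓ colSpan A3 : Submodule F (Fin d → F)) := by
    intro v hv
    obtain ⟨ha, hb⟩ := (hkerM v).mp hv
    refine ⟨⟨?_, ?_⟩, ?_⟩
    · exact (colSpan_mem_iff A1 _).mpr ⟨_, (hg v).symm⟩
    · refine (colSpan_mem_iff A2 _).mpr ⟨-(v ∘ Sum.inl ∘ Sum.inr), ?_⟩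
      rw [hg, Matrix.mulVec_neg, eq_comm, ← add_eq_zero_iff_eq_neg]
      exact ha
    · refine (colSpan_mem_iff A3 _).mpr ⟨-(v ∘ Sum.inr), ?_⟩
      rw [hg, Matrix.mulVec_neg, eq_comm, ← add_eq_zero_iff_eq_neg]
      exact hb
  let e := g.restrict hsub
  have hinj1 : Function.Injective A1.mulVec := Matrix.mulVec_injective_iff.mpr h1
  have hinj2 : Function.Injective A2.mulVec := Matrix.mulVec_injective_iff.mpr h2
  have hinj3 : Function.Injective A3.mulVec := Matrix.mulVec_injective_iff.mpr h3
  have hbij : Function.Bijective e := by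
    constructor
    · rw [← LinearMap.ker_eq_bot, LinearMap.ker_eq_bot']
      rintro ⟨v, hv⟩ hev
      have hgv : g v = 0 := congrArg Subtype.val hev
      obtain ⟨ha, hb⟩ := (hkerM v).mp hv
      have hx : (v ∘ Sum.inl ∘ Sum.inl) = 0 := by
        apply hinj1
        rw [Matrix.mulVec_zero, ← hg v, hgv]
      rw [hx, Matrix.mulVec_zero, zero_add] at ha hb
      have hy : (v ∘ Sum.inl ∘ Sum.inr) = 0 := by
        apply hinj2; rw [Matrix.mulVec_zero]; exact ha
      have hz : (v ∘ Sum.inr) = 0 := by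
        apply hinj3; rw [Matrix.mulVec_zero]; exact hb
      ext1
      funext i
      rcases i with (i | i) | i
      · exact congrFun hx i
      · exact congrFun hy i
      · exact congrFun hz i
    · rintro ⟨w, ⟨hw1, hw2⟩, hw3⟩
      obtain ⟨c1, hc1⟩ := (colSpan_mem_iff A1 w).mp hw1
      obtain ⟨c2, hc2⟩ := (colSpan_mem_iff A2 w).mp hw2
      obtain ⟨c3, hc3⟩ := (colSpan_mem_iff A3 w).mp hw3
      set v : ((Fin μ1 ⊕ Fin μ2) ⊕ Fin μ3) → F := Sum.elim (Sum.elim c1 (-c2)) (-c3) with hvdef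
      have hvx : (v ∘ Sum.inl ∘ Sum.inl) = c1 := rfl
      have hvy : (v ∘ Sum.inl ∘ Sum.inr) = -c2 := rfl
      have hvz : (v ∘ Sum.inr) = -c3 := rfl
      have hv : v ∈ LinearMap.ker M.mulVecLin := by
        rw [hkerM, hvx, hvy, hvz, Matrix.mulVec_neg, Matrix.mulVec_neg, hc1, hc2, hc3]
        constructor <;> ring_nf
      refine ⟨⟨v, hv⟩, ?_⟩
      ext1
      show g v = w
      rw [hg, hvx, hc1]
  have hfr : Module.finrank F
      (colSpan A1 ⊓ colSpan A2 ⊓ colSpan A3 : Submodule F (Fin d → F)) =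
      Module.finrank F (LinearMap.ker M.mulVecLin) :=
    (LinearEquiv.ofBijective e hbij).symm.finrank_eq.symm ▸
      ((LinearEquiv.ofBijective e hbij).finrank_eq).symm
  have hrn := LinearMap.finrank_range_add_finrank_ker M.mulVecLin
  have hdom : Module.finrank F (((Fin μ1 ⊕ Fin μ2) ⊕ Fin μ3) → F) = μ1 + μ2 + μ3 := by
    simp [Module.finrank_fintype_fun_eq_card]
  rw [hdom] at hrn
  have hrank : M.rank = Module.finrank F (LinearMap.range M.mulVecLin) := rfl
  rw [hfr, hrank]
  omega
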